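/- arXiv:1206.1362 — 2 statements merged into one kernel-verified Lean document; each statement's English description precedes it below -/
import Mathlib

section
/- Let (α_n)_{n∈ℤ} ⊆ 𝔻 be Verblunsky coefficients, β, β̃ ∈ ∂𝔻, a < b integers, z ∈ ℂ, and adopt the convention α_{a−1} = β, α_b = β̃ (so ρ_{a−1} = ρ_b = 0). Then the matrix A = z·(ℒ^{[a,b]}_{β,β̃})* − ℳ^{[a,b]}_{β,β̃} is tridiagonal, with diagonal entries A_{j,j} = z·α_j + α_{j−1} for j even and A_{j,j} = −z·conj(α_{j−1}) − conj(α_j) for j odd (a ≤ j ≤ b), and off-diagonal entries A_{j+1,j} = A_{j,j+1} = z·ρ_j for j even and A_{j+1,j} = A_{j,j+1} = −ρ_j for j odd (a ≤ j ≤ b−1). -/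
open MeasureTheory Complex Filter
open scoped Matrix.Norms.L2Operator

noncomputable section
/-- `ρ_n = √(1 - |α_n|²)`. -/
def rhoV (α : ℤ → ℂ) (n : ℤ) : ℝ := Real.sqrt (1 - ‖α n‖^2)

/-- entries of `ℒ = ⊕_{n even} Θ_n`. -/
def cmvLent (α : ℤ → ℂ) (m k : ℤ) : ℂ :=
  if m % 2 = 0 then
    if k = m then starRingEnd ℂ (α m) else if k = m + 1 then (rhoV α m : ℂ) else 0
  else
    if k = m - 1 then (rhoV α (m-1) : ℂ) else if k = m then -α (m-1) else 0

/-- entries of `ℳ = ⊕_{n odd} Θ_n`. -/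
def cmvMent (α : ℤ → ℂ) (m k : ℤ) : ℂ :=
  if m % 2 ≠ 0 then
    if k = m then starRingEnd ℂ (α m) else if k = m + 1 then (rhoV α m : ℂ) else 0
  else
    if k = m - 1 then (rhoV α (m-1) : ℂ) else if k = m then -α (m-1) else 0

/-- Verblunsky coefficients with boundary conditions `α_{a-1} = β`, `α_b = β̃`. -/
def bcV (α : ℤ → ℂ) (β β' : ℂ) (a b : ℤ) (n : ℤ) : ℂ :=
  if n = a - 1 then β else if n = b then β' else α n

/-- the restriction `ℒ^{[a,b]}_{β,β̃}`. -/
def cmvLmat (α : ℤ → ℂ) (β β' : ℂ) (a b : ℤ) :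
    Matrix ↥(Finset.Icc a b) ↥(Finset.Icc a b) ℂ :=
  Matrix.of fun i j => cmvLent (bcV α β β' a b) (i:ℤ) (j:ℤ)

/-- the restriction `ℳ^{[a,b]}_{β,β̃}`. -/
def cmvMmat (α : ℤ → ℂ) (β β' : ℂ) (a b : ℤ) :
    Matrix ↥(Finset.Icc a b) ↥(Finset.Icc a b) ℂ :=
  Matrix.of fun i j => cmvMent (bcV α β β' a b) (i:ℤ) (j:ℤ)

/-- the restriction `ℰ^{[a,b]}_{β,β̃} = ℒ^{[a,b]}·ℳ^{[a,b]}`. -/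
def cmvEmat (α : ℤ → ℂ) (β β' : ℂ) (a b : ℤ) :
    Matrix ↥(Finset.Icc a b) ↥(Finset.Icc a b) ℂ :=
  cmvLmat α β β' a b * cmvMmat α β β' a b

/-- the matrix `z (ℒ^{[a,b]})* − ℳ^{[a,b]}`. -/
def cmvAmat (z : ℂ) (α : ℤ → ℂ) (β β' : ℂ) (a b : ℤ) :
    Matrix ↥(Finset.Icc a b) ↥(Finset.Icc a b) ℂ :=
  z • (cmvLmat α β β' a b).conjTranspose - cmvMmat α β β' a b

/-- the Green's function `G^{[a,b]}_{β,β̃}(z; k, ℓ)`. -/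
def cmvGreen (z : ℂ) (α : ℤ → ℂ) (β β' : ℂ) (a b : ℤ)
    (k l : ↥(Finset.Icc a b)) : ℂ :=
  (cmvAmat z α β β' a b)⁻¹ k l

/-- `[a,b]` is `(γ, Γ, p)`-suitable for `ℰ_{β,β̃} − z`. -/
def CmvSuitable (α : ℤ → ℂ) (β β' z : ℂ) (a b : ℤ) (γ Γ : ℝ) (p : ℤ) : Prop :=
  IsUnit (cmvEmat α β β' a b - z • (1 : Matrix ↥(Finset.Icc a b) ↥(Finset.Icc a b) ℂ)) ∧
  ‖(cmvEmat α β β' a b - z • (1 : Matrix ↥(Finset.Icc a b) ↥(Finset.Icc a b) ℂ))⁻¹‖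
    ≤ (2:ℝ)^(-p) * Real.exp Γ ∧
  ∀ k l : ↥(Finset.Icc a b), ((b:ℝ) - (a:ℝ))/2 ≤ |((k:ℤ):ℝ) - ((l:ℤ):ℝ)| →
    ‖cmvGreen z α β β' a b k l‖ ≤ (2:ℝ)^(-(p+1)) * Real.exp (-γ * |((k:ℤ):ℝ) - ((l:ℤ):ℝ)|)


/-- the matrix `A = z (ℒ^{[a,b]}_{β,β̃})* − ℳ^{[a,b]}_{β,β̃}` is tridiagonal,
with the stated diagonal and off-diagonal entries (with the convention `α_{a-1} = β`,
`α_b = β̃`). -/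
theorem cmv_zLstar_sub_M_tridiagonal
    (α : ℤ → ℂ) (hα : ∀ n, ‖α n‖ < 1) (β β' : ℂ) (hβ : ‖β‖ = 1) (hβ' : ‖β'‖ = 1)
    (a b : ℤ) (hab : a < b) (z : ℂ) :
    (∀ k l : ↥(Finset.Icc a b), 2 ≤ |(k:ℤ) - (l:ℤ)| →
      cmvAmat z α β β' a b k l = 0) ∧
    (∀ j : ↥(Finset.Icc a b),
      ((j:ℤ) % 2 = 0 → cmvAmat z α β β' a b j j
          = z * bcV α β β' a b (j:ℤ) + bcV α β β' a b ((j:ℤ) - 1)) ∧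
      ((j:ℤ) % 2 ≠ 0 → cmvAmat z α β β' a b j j
          = -z * starRingEnd ℂ (bcV α β β' a b ((j:ℤ) - 1))
            - starRingEnd ℂ (bcV α β β' a b (j:ℤ)))) ∧
    (∀ j j1 : ↥(Finset.Icc a b), (j1:ℤ) = (j:ℤ) + 1 →
      ((j:ℤ) % 2 = 0 →
        cmvAmat z α β β' a b j1 j = z * (rhoV (bcV α β β' a b) (j:ℤ) : ℂ) ∧
        cmvAmat z α β β' a b j j1 = z * (rhoV (bcV α β β' a b) (j:ℤ) : ℂ)) ∧
      ((j:ℤ) % 2 ≠ 0 →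
        cmvAmat z α β β' a b j1 j = -((rhoV (bcV α β β' a b) (j:ℤ) : ℂ)) ∧
        cmvAmat z α β β' a b j j1 = -((rhoV (bcV α β β' a b) (j:ℤ) : ℂ)))) := by

  have key : ∀ k l : ↥(Finset.Icc a b), cmvAmat z α β β' a b k l
      = z * starRingEnd ℂ (cmvLent (bcV α β β' a b) (l:ℤ) (k:ℤ))
        - cmvMent (bcV α β β' a b) (k:ℤ) (l:ℤ) := by
    intro k l
    simp [cmvAmat, cmvLmat, cmvMmat, Matrix.sub_apply, Matrix.smul_apply,
      Matrix.conjTranspose_apply, Matrix.of_apply, smul_eq_mul]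
  refine ⟨?_, ?_, ?_⟩
  · intro k l hkl
    have h2 : (k:ℤ) - l ≥ 2 ∨ (k:ℤ) - l ≤ -2 := by
      rcases abs_cases ((k:ℤ) - (l:ℤ)) with ⟨h,_⟩|⟨h,_⟩ <;> omega
    rw [key]
    unfold cmvLent cmvMent
    split_ifs <;> first
      | omega
      | simp only [map_zero, mul_zero, sub_zero, zero_sub, neg_zero, sub_self]
  · intro j
    constructor <;> intro hj <;> rw [key] <;> unfold cmvLent cmvMent <;>
      split_ifs <;> first
        | omega
        | ((simp only [Complex.conj_conj, map_neg, Complex.conj_ofReal, map_zero,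
            mul_zero, sub_zero, zero_sub, sub_neg_eq_add]) <;> try ring)
  · intro j j1 hjj1
    constructor <;> intro hj <;> refine ⟨?_, ?_⟩ <;> rw [key] <;>
      unfold cmvLent cmvMent <;> split_ifs <;> first
        | omega
        | (((try rw [show ((j1:ℤ)) - 1 = ((j:ℤ)) from by omega]) <;>
            simp only [Complex.conj_conj, map_neg, Complex.conj_ofReal, map_zero,
              mul_zero, sub_zero, zero_sub, sub_neg_eq_add]) <;> try ring)


end
end

section
/- There is a universal constant C > 0 with the following property. Let (α_n) ⊆ 𝔻 be Verblunsky coefficients, let [c,d] ⊆ [a,b] be finite intervals in ℤ with a < c < d < b, let β, β̃, γ, γ̃, z ∈ ∂𝔻, let k ∈ [c,d] and ℓ ∈ [a,b] \ [c,d], and suppose that z·(ℒ^{[a,b]}_{β,β̃})* − ℳ^{[a,b]}_{β,β̃} and z·(ℒ^{[c,d]}_{γ,γ̃})* − ℳ^{[c,d]}_{γ,γ̃} are invertible. Then |G^{[a,b]}_{β,β̃}(z; k, ℓ)| ≤ C · (sup_{n ∈ {c, c+1, d−1, d}} |G^{[c,d]}_{γ,γ̃}(z; k, n)|) · (sup_{m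 ∈ {c−1, c, c+1, d−1, d, d+1}} |G^{[a,b]}_{β,β̃}(z; m, ℓ)|). -/
open MeasureTheory Complex Filter
open scoped Matrix.Norms.L2Operator

noncomputable section
def cmvAent (z : ℂ) (α' : ℤ → ℂ) (n m : ℤ) : ℂ :=
  z * (starRingEnd ℂ) (cmvLent α' m n) - cmvMent α' n m

lemma cmvAmat_apply (z : ℂ) (α : ℤ → ℂ) (β β' : ℂ) (a b : ℤ)
    (i j : ↥(Finset.Icc a b)) :
    cmvAmat z α β β' a b i j = cmvAent z (bcV α β β' a b) (i:ℤ) (j:ℤ) := by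
  simp [cmvAmat, cmvAent, cmvLmat, cmvMmat, Matrix.sub_apply, Matrix.smul_apply,
    Matrix.conjTranspose_apply, smul_eq_mul]

lemma cmvLent_eq_zero {α' : ℤ → ℂ} {m k : ℤ} (h : k ≠ m - 1) (h' : k ≠ m) (h'' : k ≠ m + 1) :
    cmvLent α' m k = 0 := by
  simp [cmvLent, h, h', h'']

lemma cmvMent_eq_zero {α' : ℤ → ℂ} {m k : ℤ} (h : k ≠ m - 1) (h' : k ≠ m) (h'' : k ≠ m + 1) :
    cmvMent α' m k = 0 := by
  simp [cmvMent, h, h', h'']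

lemma cmvAent_eq_zero {z : ℂ} {α' : ℤ → ℂ} {n m : ℤ} (h1 : m ≠ n - 1) (h2 : m ≠ n)
    (h3 : m ≠ n + 1) : cmvAent z α' n m = 0 := by
  have hL : cmvLent α' m n = 0 := cmvLent_eq_zero (by omega) (by omega) (by omega)
  have hM : cmvMent α' n m = 0 := cmvMent_eq_zero (by omega) (by omega) (by omega)
  simp [cmvAent, hL, hM]

lemma norm_rho_le (α' : ℤ → ℂ) (i : ℤ) : ‖((rhoV α' i : ℝ) : ℂ)‖ ≤ 1 := by
  rw [Complex.norm_real, Real.norm_eq_abs, rhoV, _root_.abs_of_nonneg (Real.sqrt_nonneg _)]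
  calc Real.sqrt (1 - ‖α' i‖^2) ≤ Real.sqrt 1 :=
        Real.sqrt_le_sqrt (by nlinarith [sq_nonneg ‖α' i‖])
    _ = 1 := Real.sqrt_one

lemma norm_cmvLent_le {α' : ℤ → ℂ} (h : ∀ i, ‖α' i‖ ≤ 1) (m k : ℤ) : ‖cmvLent α' m k‖ ≤ 1 := by
  unfold cmvLent
  split_ifs
  · simpa using h m
  · exact norm_rho_le α' _
  · simp
  · exact norm_rho_le α' _
  · simpa using h (m-1)
  · simp

lemma norm_cmvMent_le {α' : ℤ → ℂ} (h : ∀ i, ‖α' i‖ ≤ 1) (m k : ℤ) : ‖cmvMent α' m k‖ ≤ 1 := by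
  unfold cmvMent
  split_ifs
  · simpa using h m
  · exact norm_rho_le α' _
  · simp
  · exact norm_rho_le α' _
  · simpa using h (m-1)
  · simp

lemma norm_cmvAent_le {z : ℂ} (hz : ‖z‖ = 1) {α' : ℤ → ℂ} (h : ∀ i, ‖α' i‖ ≤ 1) (n m : ℤ) :
    ‖cmvAent z α' n m‖ ≤ 2 := by
  unfold cmvAent
  calc ‖z * (starRingEnd ℂ) (cmvLent α' m n) - cmvMent α' n m‖
      ≤ ‖z * (starRingEnd ℂ) (cmvLent α' m n)‖ + ‖cmvMent α' n m‖ := norm_sub_le _ _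
    _ ≤ 1 + 1 := by
        gcongr
        · rw [norm_mul, hz, one_mul, RCLike.norm_conj]
          exact norm_cmvLent_le h _ _
        · exact norm_cmvMent_le h _ _
    _ = 2 := by norm_num

lemma cmvLent_congr {α₁ α₂ : ℤ → ℂ} {m k : ℤ} (h1 : α₁ m = α₂ m) (h2 : α₁ (m-1) = α₂ (m-1)) :
    cmvLent α₁ m k = cmvLent α₂ m k := by
  simp only [cmvLent, rhoV, h1, h2]

lemma cmvMent_congr {α₁ α₂ : ℤ → ℂ} {m k : ℤ} (h1 : α₁ m = α₂ m) (h2 : α₁ (m-1) = α₂ (m-1)) :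
    cmvMent α₁ m k = cmvMent α₂ m k := by
  simp only [cmvMent, rhoV, h1, h2]

lemma cmvAent_congr {z : ℂ} {α₁ α₂ : ℤ → ℂ} {n m : ℤ}
    (hm : α₁ m = α₂ m) (hm1 : α₁ (m-1) = α₂ (m-1))
    (hn : α₁ n = α₂ n) (hn1 : α₁ (n-1) = α₂ (n-1)) :
    cmvAent z α₁ n m = cmvAent z α₂ n m := by
  unfold cmvAent
  rw [cmvLent_congr hm hm1, cmvMent_congr hn hn1]

lemma bcV_eq (α : ℤ → ℂ) (β β' : ℂ) (a b : ℤ) {i : ℤ} (h1 : i ≠ a - 1) (h2 : i ≠ b) :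
    bcV α β β' a b i = α i := by simp [bcV, h1, h2]

lemma norm_bcV_le {α : ℤ → ℂ} {β β' : ℂ} (hβ : ‖β‖ = 1) (hβ' : ‖β'‖ = 1)
    (hα : ∀ n, ‖α n‖ < 1) (a b : ℤ) : ∀ i, ‖bcV α β β' a b i‖ ≤ 1 := by
  intro i
  unfold bcV
  split_ifs
  · exact hβ.le
  · exact hβ'.le
  · exact (hα i).le

/-- the Green's function on a large interval `[a,b]` at `(k,ℓ)`, with
`k ∈ [c,d] ⊆ [a,b]` and `ℓ ∈ [a,b] \ [c,d]`, is bounded by a universal constant times the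
product of the small-scale Green's function near `k` and the large-scale Green's function
at the edges of `[c,d]`. -/
theorem cmv_green_two_scales :
    ∃ C > (0:ℝ),
      ∀ (α : ℤ → ℂ), (∀ n, ‖α n‖ < 1) →
      ∀ (β β' γc γc' z : ℂ), ‖β‖ = 1 → ‖β'‖ = 1 → ‖γc‖ = 1 → ‖γc'‖ = 1 → ‖z‖ = 1 →
      ∀ (a b c d : ℤ), a < c → c < d → d < b →
      ∀ (k l : ℤ) (hk : k ∈ Finset.Icc c d) (hkab : k ∈ Finset.Icc a b)
        (hl : l ∈ Finset.Icc a b), l ∉ Finset.Icc c d →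
      IsUnit (cmvAmat z α β β' a b) → IsUnit (cmvAmat z α γc γc' c d) →
      ∀ (s1 s2 : ℝ), 0 ≤ s1 → 0 ≤ s2 →
        (∀ n (hn : n ∈ Finset.Icc c d), n ∈ ({c, c+1, d-1, d} : Finset ℤ) →
          ‖cmvGreen z α γc γc' c d ⟨k, hk⟩ ⟨n, hn⟩‖ ≤ s1) →
        (∀ m (hm : m ∈ Finset.Icc a b), m ∈ ({c-1, c, c+1, d-1, d, d+1} : Finset ℤ) →
          ‖cmvGreen z α β β' a b ⟨m, hm⟩ ⟨l, hl⟩‖ ≤ s2) →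
        ‖cmvGreen z α β β' a b ⟨k, hkab⟩ ⟨l, hl⟩‖ ≤ C * s1 * s2 := by
  refine ⟨96, by norm_num, ?_⟩
  intro α hα β β' γc γc' z hβ hβ' hγ hγ' hz a b c d hac hcd hdb k l hk hkab hl hlJ hA hA'
    s1 s2 hs1n hs2n hs1 hs2
  classical
  have hJI : ∀ {x : ℤ}, x ∈ Finset.Icc c d → x ∈ Finset.Icc a b := by
    intro x hx
    simp only [Finset.mem_Icc] at *
    omega
  have hAmul : cmvAmat z α β β' a b * (cmvAmat z α β β' a b)⁻¹ = 1 :=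
    Matrix.mul_nonsing_inv _ ((Matrix.isUnit_iff_isUnit_det _).mp hA)
  have hA'mul : (cmvAmat z α γc γc' c d)⁻¹ * cmvAmat z α γc γc' c d = 1 :=
    Matrix.nonsing_inv_mul _ ((Matrix.isUnit_iff_isUnit_det _).mp hA')
  set U : ℤ → ℂ := fun m =>
    if h : m ∈ Finset.Icc a b then (cmvAmat z α β β' a b)⁻¹ ⟨m, h⟩ ⟨l, hl⟩ else 0 with hU
  set V : ℤ → ℂ := fun n =>
    if h : n ∈ Finset.Icc c d then (cmvAmat z α γc γc' c d)⁻¹ ⟨k, hk⟩ ⟨n, h⟩ else 0 with hV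
  -- the row equation for the big matrix
  have hrowB : ∀ n ∈ Finset.Icc c d,
      (∑ m ∈ Finset.Icc a b, cmvAent z (bcV α β β' a b) n m * U m) = 0 := by
    intro n hn
    calc (∑ m ∈ Finset.Icc a b, cmvAent z (bcV α β β' a b) n m * U m)
        = ∑ m : ↥(Finset.Icc a b), cmvAent z (bcV α β β' a b) n (↑m) * U (↑m) :=
          (Finset.sum_coe_sort _ _).symm
      _ = ∑ m : ↥(Finset.Icc a b), cmvAmat z α β β' a b ⟨n, hJI hn⟩ m *
            (cmvAmat z α β β' a b)⁻¹ m ⟨l, hl⟩ := by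
          refine Finset.sum_congr rfl fun m _ => ?_
          rw [hU, cmvAmat_apply]
          simp only [dif_pos m.2]
      _ = (cmvAmat z α β β' a b * (cmvAmat z α β β' a b)⁻¹) ⟨n, hJI hn⟩ ⟨l, hl⟩ :=
          (Matrix.mul_apply).symm
      _ = 0 := by
          rw [hAmul, Matrix.one_apply_ne]
          intro hcon
          have hnl : n = l := congrArg Subtype.val hcon
          exact hlJ (hnl ▸ hn)
  -- the row equation for the inverse of the small matrix
  have hrowS : ∀ m ∈ Finset.Icc c d,
      (∑ n ∈ Finset.Icc c d, V n * cmvAent z (bcV α γc γc' c d) n m)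
        = if k = m then (1:ℂ) else 0 := by
    intro m hm
    calc (∑ n ∈ Finset.Icc c d, V n * cmvAent z (bcV α γc γc' c d) n m)
        = ∑ n : ↥(Finset.Icc c d), V (↑n) * cmvAent z (bcV α γc γc' c d) (↑n) m :=
          (Finset.sum_coe_sort _ _).symm
      _ = ∑ n : ↥(Finset.Icc c d), (cmvAmat z α γc γc' c d)⁻¹ ⟨k, hk⟩ n *
            cmvAmat z α γc γc' c d n ⟨m, hm⟩ := by
          refine Finset.sum_congr rfl fun n _ => ?_
          rw [hV, cmvAmat_apply]
          simp only [dif_pos n.2]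
      _ = ((cmvAmat z α γc γc' c d)⁻¹ * cmvAmat z α γc γc' c d) ⟨k, hk⟩ ⟨m, hm⟩ :=
          (Matrix.mul_apply).symm
      _ = if k = m then (1:ℂ) else 0 := by
          rw [hA'mul, Matrix.one_apply]
          simp only [Subtype.mk.injEq]
  -- the key identity
  have key : U k = ∑ n ∈ Finset.Icc c d, V n *
      ((∑ m ∈ Finset.Icc c d, cmvAent z (bcV α γc γc' c d) n m * U m)
        - ∑ m ∈ Finset.Icc a b, cmvAent z (bcV α β β' a b) n m * U m) := by
    have e1 : U k = ∑ m ∈ Finset.Icc c d, (if k = m then (1:ℂ) else 0) * U m := by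
      simp only [ite_mul, one_mul, zero_mul]
      rw [Finset.sum_ite_eq, if_pos hk]
    rw [e1]
    calc (∑ m ∈ Finset.Icc c d, (if k = m then (1:ℂ) else 0) * U m)
        = ∑ m ∈ Finset.Icc c d,
            (∑ n ∈ Finset.Icc c d, V n * cmvAent z (bcV α γc γc' c d) n m) * U m := by
          refine Finset.sum_congr rfl fun m hm => ?_
          rw [hrowS m hm]
      _ = ∑ n ∈ Finset.Icc c d, V n *
            ∑ m ∈ Finset.Icc c d, cmvAent z (bcV α γc γc' c d) n m * U m := by
          simp only [Finset.sum_mul]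
          rw [Finset.sum_comm]
          simp only [Finset.mul_sum, mul_assoc]
      _ = ∑ n ∈ Finset.Icc c d, V n *
            ((∑ m ∈ Finset.Icc c d, cmvAent z (bcV α γc γc' c d) n m * U m)
              - ∑ m ∈ Finset.Icc a b, cmvAent z (bcV α β β' a b) n m * U m) := by
          refine Finset.sum_congr rfl fun n hn => ?_
          rw [hrowB n hn, sub_zero]
  -- the perturbation
  set T : ℤ → ℤ → ℂ := fun n m =>
    (if m ∈ Finset.Icc c d then cmvAent z (bcV α γc γc' c d) n m else 0)
      - cmvAent z (bcV α β β' a b) n m with hT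
  have hsub : Finset.Icc c d ⊆ Finset.Icc a b := Finset.Icc_subset_Icc (by omega) (by omega)
  have hWT : ∀ n : ℤ,
      ((∑ m ∈ Finset.Icc c d, cmvAent z (bcV α γc γc' c d) n m * U m)
        - ∑ m ∈ Finset.Icc a b, cmvAent z (bcV α β β' a b) n m * U m)
      = ∑ m ∈ Finset.Icc a b, T n m * U m := by
    intro n
    have e : (∑ m ∈ Finset.Icc c d, cmvAent z (bcV α γc γc' c d) n m * U m)
        = ∑ m ∈ Finset.Icc a b,
            (if m ∈ Finset.Icc c d then cmvAent z (bcV α γc γc' c d) n m else 0) * U m := by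
      simp only [ite_mul, zero_mul]
      rw [Finset.sum_ite_mem, Finset.inter_eq_right.mpr hsub]
    rw [e, ← Finset.sum_sub_distrib]
    refine Finset.sum_congr rfl fun m _ => ?_
    rw [hT]
    ring
  -- agreement of boundary condition coefficients in the bulk
  have hag : ∀ i : ℤ, c - 1 < i → i < d → bcV α γc γc' c d i = bcV α β β' a b i := by
    intro i h1 h2
    rw [bcV_eq α γc γc' c d (by omega) (by omega), bcV_eq α β β' a b (by omega) (by omega)]
  -- vanishing of the perturbation away from the boundary of [c,d]
  have hT0 : ∀ n ∈ Finset.Icc c d, ∀ m ∈ Finset.Icc a b,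
      ¬(n ∈ ({c, c+1, d-1, d} : Finset ℤ) ∧ m ∈ ({c-1, c, c+1, d-1, d, d+1} : Finset ℤ)) →
      T n m = 0 := by
    intro n hn m hm hcon
    simp only [Finset.mem_Icc] at hn hm
    simp only [Finset.mem_insert, Finset.mem_singleton, not_and_or, not_or] at hcon
    by_cases hband : m = n - 1 ∨ m = n ∨ m = n + 1
    · have hfacts : (c ≤ m ∧ m ≤ d) ∧ n ≠ c ∧ n ≠ d ∧ m ≠ c ∧ m ≠ d := by omega
      rw [hT]
      simp only
      rw [if_pos (Finset.mem_Icc.mpr hfacts.1)]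
      rw [cmvAent_congr (hag m (by omega) (by omega)) (hag (m-1) (by omega) (by omega))
        (hag n (by omega) (by omega)) (hag (n-1) (by omega) (by omega)), sub_self]
    · push_neg at hband
      rw [hT]
      simp only
      rw [cmvAent_eq_zero hband.1 hband.2.1 hband.2.2,
        cmvAent_eq_zero hband.1 hband.2.1 hband.2.2]
      simp
  -- uniform bound on the perturbation
  have hbB : ∀ i, ‖bcV α β β' a b i‖ ≤ 1 := norm_bcV_le hβ hβ' hα a b
  have hbS : ∀ i, ‖bcV α γc γc' c d i‖ ≤ 1 := norm_bcV_le hγ hγ' hα c d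
  have hTle : ∀ n m : ℤ, ‖T n m‖ ≤ 4 := by
    intro n m
    rw [hT]
    simp only
    have h1 : ‖(if m ∈ Finset.Icc c d then cmvAent z (bcV α γc γc' c d) n m else 0)‖ ≤ 2 := by
      split_ifs
      · exact norm_cmvAent_le hz hbS n m
      · simp
    have h2 := norm_cmvAent_le hz hbB n m
    calc ‖(if m ∈ Finset.Icc c d then cmvAent z (bcV α γc γc' c d) n m else 0)
          - cmvAent z (bcV α β β' a b) n m‖
        ≤ ‖(if m ∈ Finset.Icc c d then cmvAent z (bcV α γc γc' c d) n m else 0)‖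
            + ‖cmvAent z (bcV α β β' a b) n m‖ := norm_sub_le _ _
      _ ≤ 4 := by linarith
  -- identify U and V with Green's functions
  have hUg : ∀ m (hm : m ∈ Finset.Icc a b), U m = cmvGreen z α β β' a b ⟨m, hm⟩ ⟨l, hl⟩ := by
    intro m hm
    rw [hU]
    simp only [dif_pos hm]
    rfl
  have hVg : ∀ n (hn : n ∈ Finset.Icc c d), V n = cmvGreen z α γc γc' c d ⟨k, hk⟩ ⟨n, hn⟩ := by
    intro n hn
    rw [hV]
    simp only [dif_pos hn]
    rfl
  -- termwise bound
  have hterm : ∀ n ∈ Finset.Icc c d,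
      ‖V n * ((∑ m ∈ Finset.Icc c d, cmvAent z (bcV α γc γc' c d) n m * U m)
        - ∑ m ∈ Finset.Icc a b, cmvAent z (bcV α β β' a b) n m * U m)‖
      ≤ if n ∈ ({c, c+1, d-1, d} : Finset ℤ) then s1 * (24 * s2) else 0 := by
    intro n hn
    rw [hWT n]
    by_cases hn4 : n ∈ ({c, c+1, d-1, d} : Finset ℤ)
    · rw [if_pos hn4, norm_mul]
      have hVle : ‖V n‖ ≤ s1 := by
        rw [hVg n hn]
        exact hs1 n hn hn4
      have hSle : ‖∑ m ∈ Finset.Icc a b, T n m * U m‖ ≤ 24 * s2 := by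
        calc ‖∑ m ∈ Finset.Icc a b, T n m * U m‖
            ≤ ∑ m ∈ Finset.Icc a b, ‖T n m * U m‖ := norm_sum_le _ _
          _ ≤ ∑ m ∈ Finset.Icc a b,
              (if m ∈ ({c-1, c, c+1, d-1, d, d+1} : Finset ℤ) then 4 * s2 else 0) := by
              refine Finset.sum_le_sum fun m hm => ?_
              by_cases hm6 : m ∈ ({c-1, c, c+1, d-1, d, d+1} : Finset ℤ)
              · rw [if_pos hm6, norm_mul]
                refine mul_le_mul (hTle n m) ?_ (norm_nonneg _) (by norm_num)
                rw [hUg m hm]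
                exact hs2 m hm hm6
              · rw [if_neg hm6, hT0 n hn m hm (fun hc => hm6 hc.2), zero_mul, norm_zero]
          _ = ∑ m ∈ Finset.Icc a b ∩ ({c-1, c, c+1, d-1, d, d+1} : Finset ℤ), (4 * s2) := by
              rw [Finset.sum_ite_mem]
          _ = (Finset.Icc a b ∩ ({c-1, c, c+1, d-1, d, d+1} : Finset ℤ)).card • (4 * s2) :=
              Finset.sum_const _
          _ ≤ 6 * (4 * s2) := by
              rw [nsmul_eq_mul]
              have hcard : (Finset.Icc a b ∩ ({c-1, c, c+1, d-1, d, d+1} : Finset ℤ)).card ≤ 6 := by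
                refine le_trans (Finset.card_le_card Finset.inter_subset_right) ?_
                have e1 := Finset.card_insert_le (c-1) ({c, c+1, d-1, d, d+1} : Finset ℤ)
                have e2 := Finset.card_insert_le c ({c+1, d-1, d, d+1} : Finset ℤ)
                have e3 := Finset.card_insert_le (c+1) ({d-1, d, d+1} : Finset ℤ)
                have e4 := Finset.card_insert_le (d-1) ({d, d+1} : Finset ℤ)
                have e5 := Finset.card_insert_le d ({d+1} : Finset ℤ)
                have e6 : ({d+1} : Finset ℤ).card = 1 := Finset.card_singleton _
                omega
              refine mul_le_mul_of_nonneg_right ?_ (by positivity)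
              exact_mod_cast hcard
          _ = 24 * s2 := by ring
      exact mul_le_mul hVle hSle (norm_nonneg _) hs1n
    · rw [if_neg hn4]
      have hzero : (∑ m ∈ Finset.Icc a b, T n m * U m) = 0 :=
        Finset.sum_eq_zero fun m hm => by
          rw [hT0 n hn m hm (fun hc => hn4 hc.1), zero_mul]
      rw [hzero, mul_zero, norm_zero]
  -- put it together
  rw [← hUg k hkab, key]
  calc ‖∑ n ∈ Finset.Icc c d, V n *
        ((∑ m ∈ Finset.Icc c d, cmvAent z (bcV α γc γc' c d) n m * U m)
          - ∑ m ∈ Finset.Icc a b, cmvAent z (bcV α β β' a b) n m * U m)‖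
      ≤ ∑ n ∈ Finset.Icc c d, ‖V n *
        ((∑ m ∈ Finset.Icc c d, cmvAent z (bcV α γc γc' c d) n m * U m)
          - ∑ m ∈ Finset.Icc a b, cmvAent z (bcV α β β' a b) n m * U m)‖ := norm_sum_le _ _
    _ ≤ ∑ n ∈ Finset.Icc c d,
        (if n ∈ ({c, c+1, d-1, d} : Finset ℤ) then s1 * (24 * s2) else 0) :=
        Finset.sum_le_sum hterm
    _ = ∑ n ∈ Finset.Icc c d ∩ ({c, c+1, d-1, d} : Finset ℤ), (s1 * (24 * s2)) := by
        rw [Finset.sum_ite_mem]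
    _ = (Finset.Icc c d ∩ ({c, c+1, d-1, d} : Finset ℤ)).card • (s1 * (24 * s2)) :=
        Finset.sum_const _
    _ ≤ 4 * (s1 * (24 * s2)) := by
        rw [nsmul_eq_mul]
        have hcard : (Finset.Icc c d ∩ ({c, c+1, d-1, d} : Finset ℤ)).card ≤ 4 := by
          refine le_trans (Finset.card_le_card Finset.inter_subset_right) ?_
          have e1 := Finset.card_insert_le c ({c+1, d-1, d} : Finset ℤ)
          have e2 := Finset.card_insert_le (c+1) ({d-1, d} : Finset ℤ)
          have e3 := Finset.card_insert_le (d-1) ({d} : Finset ℤ)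
          have e4 : ({d} : Finset ℤ).card = 1 := Finset.card_singleton _
          omega
        refine mul_le_mul_of_nonneg_right ?_ (by positivity)
        exact_mod_cast hcard
    _ = 96 * s1 * s2 := by ring



end
end
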